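/- The logarithm of the product K_p = ∏_{p prime, p ≥ 3} sec(π/p) satisfies log K_p = ∑_{k=1}^∞ ((2^{2k}-1)·ζ(2k)/k) · (P(2k) - 2^{-2k}), where P(s) = ∑_{p prime} p^{-s} is the prime zeta function. -/

import Mathlib

open Real Filter

lemma hasSum_neg_log_sin {x : ℝ} (h0 : 0 < x) (h1 : x < 1) :
    HasSum (fun k : ℕ =>
        (∑' m : ℕ, 1 / ((m : ℝ) + 1) ^ (2 * (k + 1))) * x ^ (2 * (k + 1)) / ((k : ℝ) + 1))
      (-Real.log (Real.sin (π * x) / (π * x))) := by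
  have hπx : 0 < π * x := by positivity
  have hsin : 0 < Real.sin (π * x) / (π * x) :=
    div_pos (Real.sin_pos_of_pos_of_lt_pi hπx (by nlinarith [Real.pi_pos])) hπx
  have hlt : ∀ n : ℕ, x ^ 2 / ((n : ℝ) + 1) ^ 2 < 1 := by
    intro n
    rw [div_lt_one (by positivity)]
    nlinarith [(n.cast_nonneg : (0:ℝ) ≤ n)]
  have hfac : ∀ n : ℕ, 0 < 1 - x ^ 2 / ((n : ℝ) + 1) ^ 2 := fun n => by linarith [hlt n]
  -- Step A
  have tA : Tendsto (fun n : ℕ => ∏ j ∈ Finset.range n, ((1 : ℝ) - x ^ 2 / ((j : ℝ) + 1) ^ 2))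
      atTop (nhds (Real.sin (π * x) / (π * x))) := by
    have h' := (Real.tendsto_euler_sin_prod x).div_const (π * x)
    simpa [mul_div_assoc, mul_div_cancel_left₀ _ hπx.ne'] using h'
  have tlog := ((Real.continuousAt_log hsin.ne').tendsto).comp tA
  have hlogprod : ∀ n : ℕ,
      Real.log (∏ j ∈ Finset.range n, ((1 : ℝ) - x ^ 2 / ((j : ℝ) + 1) ^ 2)) =
        ∑ j ∈ Finset.range n, Real.log (1 - x ^ 2 / ((j : ℝ) + 1) ^ 2) := fun n =>
    Real.log_prod (fun j _ => (hfac j).ne')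
  have hA : HasSum (fun n : ℕ => -Real.log (1 - x ^ 2 / ((n : ℝ) + 1) ^ 2))
      (-Real.log (Real.sin (π * x) / (π * x))) := by
    rw [hasSum_iff_tendsto_nat_of_nonneg (fun n => ?_)]
    swap
    · have hq : 0 ≤ x ^ 2 / ((n : ℝ) + 1) ^ 2 := by positivity
      have h1n : (0:ℝ) ≤ 1 - x ^ 2 / ((n : ℝ) + 1) ^ 2 := by linarith [hfac n]
      have h2n : 1 - x ^ 2 / ((n : ℝ) + 1) ^ 2 ≤ 1 := by linarith
      have := Real.log_nonpos h1n h2n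
      linarith
    have := tlog.neg
    simp only [Function.comp_def, hlogprod] at this
    simpa [Finset.sum_neg_distrib] using this
  -- Step B
  have hB : ∀ n : ℕ, HasSum (fun k : ℕ => (x ^ 2 / ((n : ℝ) + 1) ^ 2) ^ (k + 1) / ((k : ℝ) + 1))
      (-Real.log (1 - x ^ 2 / ((n : ℝ) + 1) ^ 2)) := by
    intro n
    have habs : |x ^ 2 / ((n : ℝ) + 1) ^ 2| < 1 := by
      rw [abs_of_nonneg (by positivity)]; exact hlt n
    exact_mod_cast hasSum_pow_div_log_of_abs_lt_one habs
  set f : ℕ → ℕ → ℝ := fun n k => (x ^ 2 / ((n : ℝ) + 1) ^ 2) ^ (k + 1) / ((k : ℝ) + 1) with hf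
  have hnn : ∀ p : ℕ × ℕ, 0 ≤ Function.uncurry f p := fun p => by
    simp only [Function.uncurry, hf]; positivity
  have hrow : ∀ n, Summable (f n) := fun n => (hB n).summable
  have hsum : Summable (Function.uncurry f) := by
    refine (summable_prod_of_nonneg hnn).mpr ⟨fun n => hrow n, ?_⟩
    have : (fun n => ∑' k, f n k) = fun n : ℕ => -Real.log (1 - x ^ 2 / ((n : ℝ) + 1) ^ 2) :=
      funext fun n => (hB n).tsum_eq
    rw [show (fun n => ∑' k, Function.uncurry f (n, k)) = fun n => ∑' k, f n k from rfl, this]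
    exact hA.summable
  have hswap : Summable (Function.uncurry fun k n => f n k) := hsum.prod_symm
  have hcolpair := (summable_prod_of_nonneg (fun p => hnn (p.2, p.1))).mp hswap
  have hcol : ∀ k, Summable fun n => f n k := hcolpair.1
  have hScol : Summable fun k => ∑' n, f n k := hcolpair.2
  have key : ∑' k, ∑' n, f n k = -Real.log (Real.sin (π * x) / (π * x)) := by
    rw [Summable.tsum_comm' hsum hrow hcol]
    calc ∑' n, ∑' k, f n k = ∑' n : ℕ, -Real.log (1 - x ^ 2 / ((n : ℝ) + 1) ^ 2) :=
          tsum_congr fun n => (hB n).tsum_eq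
      _ = _ := hA.tsum_eq
  have hfinal : (fun k : ℕ =>
      (∑' m : ℕ, 1 / ((m : ℝ) + 1) ^ (2 * (k + 1))) * x ^ (2 * (k + 1)) / ((k : ℝ) + 1)) =
      fun k => ∑' n, f n k := by
    funext k
    have hpt : ∀ n : ℕ, f n k =
        x ^ (2 * (k + 1)) / ((k : ℝ) + 1) * (1 / ((n : ℝ) + 1) ^ (2 * (k + 1))) := by
      intro n
      simp only [hf]
      rw [div_pow, ← pow_mul, ← pow_mul]
      ring
    rw [tsum_congr hpt, tsum_mul_left]
    ring
  rw [← key, hfinal]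
  exact hScol.hasSum

lemma hasSum_neg_log_cos {x : ℝ} (h0 : 0 < x) (h13 : x ≤ 1 / 3) :
    HasSum (fun k : ℕ =>
        ((2 : ℝ) ^ (2 * (k + 1)) - 1) * (∑' m : ℕ, 1 / ((m : ℝ) + 1) ^ (2 * (k + 1))) /
            ((k : ℝ) + 1) * x ^ (2 * (k + 1)))
      (-Real.log (Real.cos (π * x))) := by
  have h1 : x < 1 := by linarith
  have h2 : 2 * x < 1 := by linarith
  have hM1 := hasSum_neg_log_sin h0 h1
  have hM2 := hasSum_neg_log_sin (x := 2 * x) (by linarith) h2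
  have hπx : 0 < π * x := by positivity
  have hs1 : 0 < Real.sin (π * x) := Real.sin_pos_of_pos_of_lt_pi hπx (by nlinarith [Real.pi_pos])
  have hs2 : 0 < Real.sin (π * (2 * x)) :=
    Real.sin_pos_of_pos_of_lt_pi (by positivity) (by nlinarith [Real.pi_pos])
  have hA : 0 < Real.sin (π * (2 * x)) / (π * (2 * x)) := div_pos hs2 (by positivity)
  have hB : 0 < Real.sin (π * x) / (π * x) := div_pos hs1 hπx
  have hcos : Real.cos (π * x) =
      (Real.sin (π * (2 * x)) / (π * (2 * x))) / (Real.sin (π * x) / (π * x)) := by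
    have hs : Real.sin (π * (2 * x)) = 2 * Real.sin (π * x) * Real.cos (π * x) := by
      rw [show π * (2 * x) = 2 * (π * x) by ring, Real.sin_two_mul]
    rw [hs]
    field_simp
  have hlog : -Real.log (Real.cos (π * x)) =
      -Real.log (Real.sin (π * (2 * x)) / (π * (2 * x))) -
        -Real.log (Real.sin (π * x) / (π * x)) := by
    rw [hcos, Real.log_div hA.ne' hB.ne']
    ring
  rw [hlog]
  have heq : (fun k : ℕ =>
      ((2 : ℝ) ^ (2 * (k + 1)) - 1) * (∑' m : ℕ, 1 / ((m : ℝ) + 1) ^ (2 * (k + 1))) /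
          ((k : ℝ) + 1) * x ^ (2 * (k + 1))) =
      fun k : ℕ =>
        (∑' m : ℕ, 1 / ((m : ℝ) + 1) ^ (2 * (k + 1))) * (2 * x) ^ (2 * (k + 1)) / ((k : ℝ) + 1) -
          (∑' m : ℕ, 1 / ((m : ℝ) + 1) ^ (2 * (k + 1))) * x ^ (2 * (k + 1)) / ((k : ℝ) + 1) := by
    funext k
    rw [mul_pow]
    ring
  rw [heq]
  exact hM2.sub hM1


lemma summable_prime_ite (e : ℕ) (he : 2 ≤ e) :
    Summable (fun n : ℕ => if n.Prime then 1 / (n : ℝ) ^ e else 0) := by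
  have hg : Summable (fun n : ℕ => 1 / (n : ℝ) ^ 2) := summable_one_div_nat_pow.mpr one_lt_two
  refine hg.of_nonneg_of_le (fun n => ?_) (fun n => ?_)
  · split
    · positivity
    · exact le_rfl
  · split
    · rename_i hp
      have h1 : (1 : ℝ) ≤ (n : ℝ) := by exact_mod_cast hp.one_lt.le
      have h2 : (n : ℝ) ^ 2 ≤ (n : ℝ) ^ e := pow_le_pow_right₀ h1 he
      exact one_div_le_one_div_of_le (by positivity) h2
    · positivity

lemma prime_split (e : ℕ) (he : 2 ≤ e) :
    (∑' p : Nat.Primes, 1 / ((p : ℕ) : ℝ) ^ e) - 1 / 2 ^ e =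
      ∑' p : ℕ, (if p.Prime ∧ 3 ≤ p then 1 / (p : ℝ) ^ e else 0) := by
  set w : ℕ → ℝ := fun n => 1 / (n : ℝ) ^ e with hw
  have h1 : (∑' p : Nat.Primes, 1 / ((p : ℕ) : ℝ) ^ e) =
      ∑' n : ℕ, (if n.Prime then w n else 0) := by
    calc (∑' p : Nat.Primes, w (p : ℕ)) = ∑' n : ℕ, Set.indicator {p : ℕ | p.Prime} w n :=
          tsum_subtype {p : ℕ | p.Prime} w
      _ = _ := tsum_congr fun n => by simp [Set.indicator_apply, Set.mem_setOf_eq]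
  have h2 := Summable.tsum_eq_add_tsum_ite (summable_prime_ite e he) 2
  have h3 : (fun n : ℕ => if n = 2 then 0 else (if n.Prime then w n else 0)) =
      fun n : ℕ => if n.Prime ∧ 3 ≤ n then w n else 0 := by
    funext n
    by_cases h2' : n = 2
    · subst h2'; simp
    · by_cases hp : n.Prime
      · have h3n : 3 ≤ n := by have := hp.two_le; omega
        simp [h2', hp, h3n]
      · simp [h2', hp]
  rw [h1, h2, h3]
  have : (if Nat.Prime 2 then w 2 else 0) = 1 / 2 ^ e := by
    simp [hw, Nat.prime_two]
  rw [this]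
  ring

theorem log_Kp_eq (Kp : ℝ) (hKp : 0 < Kp)
    (h : Tendsto
      (fun n : ℕ =>
        ∏ p ∈ (Finset.range n).filter (fun p => p.Prime ∧ 3 ≤ p), (Real.cos (π / p))⁻¹)
      atTop (nhds Kp)) :
    Real.log Kp =
      ∑' k : ℕ,
        ((2 ^ (2 * (k + 1)) - 1) * (∑' m : ℕ, 1 / ((m : ℝ) + 1) ^ (2 * (k + 1))) / ((k : ℝ) + 1)) *
          ((∑' p : Nat.Primes, 1 / ((p : ℕ) : ℝ) ^ (2 * (k + 1))) - 1 / 2 ^ (2 * (k + 1))) := by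
  -- coefficients
  set c : ℕ → ℝ := fun k =>
    ((2 : ℝ) ^ (2 * (k + 1)) - 1) * (∑' m : ℕ, 1 / ((m : ℝ) + 1) ^ (2 * (k + 1))) / ((k : ℝ) + 1)
    with hc
  have hcnn : ∀ k, 0 ≤ c k := by
    intro k
    apply div_nonneg _ (by positivity)
    apply mul_nonneg
    · have : (1 : ℝ) ≤ 2 ^ (2 * (k + 1)) := one_le_pow₀ one_le_two
      linarith
    · exact tsum_nonneg fun m => by positivity
  -- positivity of cosines
  have hcospos : ∀ p : ℕ, p.Prime → 3 ≤ p → 0 < Real.cos (π / p) := by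
    intro p hp h3
    have hp2 : (2 : ℝ) < p := by exact_mod_cast (by omega : 2 < p)
    apply Real.cos_pos_of_mem_Ioo
    constructor
    · have : 0 < π / p := by positivity
      have : 0 < π / 2 := by positivity
      linarith
    · exact div_lt_div_of_pos_left Real.pi_pos two_pos hp2
  have hcosle : ∀ p : ℕ, Real.cos (π / p) ≤ 1 := fun p => Real.cos_le_one _
  -- stage 1 : HasSum G (log Kp)
  set G : ℕ → ℝ := fun p => if p.Prime ∧ 3 ≤ p then -Real.log (Real.cos (π / p)) else 0 with hG
  have hGnn : ∀ p, 0 ≤ G p := by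
    intro p
    simp only [hG]
    split
    · rename_i hp
      have := Real.log_nonpos (hcospos p hp.1 hp.2).le (hcosle p)
      linarith
    · exact le_rfl
  have hGsum : HasSum G (Real.log Kp) := by
    rw [hasSum_iff_tendsto_nat_of_nonneg hGnn]
    have hl := ((Real.continuousAt_log hKp.ne').tendsto).comp h
    have heq : ∀ n : ℕ,
        Real.log (∏ p ∈ (Finset.range n).filter (fun p => p.Prime ∧ 3 ≤ p),
          (Real.cos (π / p))⁻¹) = ∑ i ∈ Finset.range n, G i := by
      intro n
      rw [Real.log_prod]
      · rw [Finset.sum_filter]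
        apply Finset.sum_congr rfl
        intro p _
        simp only [hG]
        split
        · exact Real.log_inv _
        · rfl
      · intro p hp
        rw [Finset.mem_filter] at hp
        exact inv_ne_zero (hcospos p hp.2.1 hp.2.2).ne'
    exact hl.congr heq
  -- stage 2: rows
  set F : ℕ → ℕ → ℝ := fun p k =>
    if p.Prime ∧ 3 ≤ p then c k * (1 / (p : ℝ) ^ (2 * (k + 1))) else 0 with hF
  have hrow : ∀ p : ℕ, HasSum (F p) (G p) := by
    intro p
    simp only [hF, hG]
    split
    · rename_i hp
      have hp0 : (0 : ℝ) < p := by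
        have : (3 : ℝ) ≤ p := by exact_mod_cast hp.2
        linarith
      have hx0 : 0 < 1 / (p : ℝ) := by positivity
      have hx13 : 1 / (p : ℝ) ≤ 1 / 3 := by
        apply one_div_le_one_div_of_le (by norm_num)
        exact_mod_cast hp.2
      have hs := hasSum_neg_log_cos hx0 hx13
      have hxe : ∀ k : ℕ, (1 / (p : ℝ)) ^ (2 * (k + 1)) = 1 / (p : ℝ) ^ (2 * (k + 1)) :=
        fun k => one_div_pow _ _
      have hπ : π * (1 / (p : ℝ)) = π / p := mul_one_div _ _
      rw [hπ] at hs
      refine HasSum.congr_fun hs fun k => ?_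
      rw [hxe]
    · exact hasSum_zero
  have hFnn : ∀ q : ℕ × ℕ, 0 ≤ Function.uncurry F q := by
    intro q
    simp only [Function.uncurry, hF]
    split
    · exact mul_nonneg (hcnn _) (by positivity)
    · exact le_rfl
  have hrowS : ∀ p, Summable (F p) := fun p => (hrow p).summable
  have hsum : Summable (Function.uncurry F) := by
    refine (summable_prod_of_nonneg hFnn).mpr ⟨hrowS, ?_⟩
    have : (fun p => ∑' k, Function.uncurry F (p, k)) = G := funext fun p => (hrow p).tsum_eq
    rw [this]
    exact hGsum.summable
  have hswap : Summable (Function.uncurry fun k p => F p k) := hsum.prod_symm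
  have hcolpair := (summable_prod_of_nonneg (fun q => hFnn (q.2, q.1))).mp hswap
  have hcol : ∀ k, Summable fun p => F p k := hcolpair.1
  -- assemble
  have key : Real.log Kp = ∑' k, ∑' p, F p k := by
    rw [← hGsum.tsum_eq]
    rw [Summable.tsum_comm' hsum hrowS hcol]
    exact tsum_congr fun p => (hrow p).tsum_eq.symm
  rw [key]
  refine tsum_congr fun k => ?_
  have hcol_eq : ∑' p, F p k =
      c k * ∑' p : ℕ, (if p.Prime ∧ 3 ≤ p then 1 / (p : ℝ) ^ (2 * (k + 1)) else 0) := by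
    rw [← tsum_mul_left]
    refine tsum_congr fun p => ?_
    simp only [hF, mul_ite, mul_zero]
  rw [hcol_eq, ← prime_split (2 * (k + 1)) (by omega)]
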